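/- For any connected graph G: (a) c(G) ≤ c_lazy(G); (b) c(G) ≤ c_attack(G) ≤ 2·c(G); (c) c_active(G) ≤ 2·c(G). -/

import Mathlib

open SimpleGraph

variable {V : Type*}

/-- A (positional) strategy for `k` cops on the graph `G`: an initial placement and a
move function; each cop may stay or move to an adjacent vertex. -/
structure CopStrat (G : SimpleGraph V) (k : ℕ) where
  init : Fin k → V
  move : (Fin k → V) → V → Fin k → V
  valid : ∀ c r i, move c r i = c i ∨ G.Adj (c i) (move c r i)

/-- A strategy for the robber: an initial placement (knowing the cops' placement) and a
move function; the robber may stay or move to an adjacent vertex. -/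
structure RobStrat (G : SimpleGraph V) (k : ℕ) where
  init : (Fin k → V) → V
  move : (Fin k → V) → V → V
  valid : ∀ c r, move c r = r ∨ G.Adj r (move c r)

/-- The play determined by initial placements and move functions: position of the cops and
of the robber after `n` full rounds (cops move first in each round). -/
def gplay {k : ℕ} (ci : Fin k → V) (cm : (Fin k → V) → V → Fin k → V)
    (ri : (Fin k → V) → V) (rm : (Fin k → V) → V → V) : ℕ → (Fin k → V) × V
  | 0 => (ci, ri ci)
  | n + 1 =>
    let p := gplay ci cm ri rm n
    let c' := cm p.1 p.2
    (c', rm c' p.2)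

/-- The robber is caught: at some moment (either on a cops' move, or because the
positions already coincide) a cop occupies the robber's vertex. -/
def gCaught {k : ℕ} (ci : Fin k → V) (cm : (Fin k → V) → V → Fin k → V)
    (ri : (Fin k → V) → V) (rm : (Fin k → V) → V → V) : Prop :=
  ∃ n, ∃ i,
    (gplay ci cm ri rm n).1 i = (gplay ci cm ri rm n).2 ∨
      cm (gplay ci cm ri rm n).1 (gplay ci cm ri rm n).2 i = (gplay ci cm ri rm n).2

/-- `k` cops have a winning strategy on `G`. -/
def CopsWin (G : SimpleGraph V) (k : ℕ) : Prop :=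
  ∃ CS : CopStrat G k, ∀ RS : RobStrat G k,
    gCaught CS.init CS.move RS.init RS.move

/-- The cop number of `G`. -/
noncomputable def copNumber (G : SimpleGraph V) : ℕ := sInf {k | CopsWin G k}


/-- A lazy cop strategy: at most one cop moves in each cops' turn. -/
structure LazyCopStrat (G : SimpleGraph V) (k : ℕ) extends CopStrat G k where
  lazy : ∀ c r i j, move c r i ≠ c i → move c r j ≠ c j → i = j

/-- `k` lazy cops have a winning strategy on `G`. -/
def LazyCopsWin (G : SimpleGraph V) (k : ℕ) : Prop :=
  ∃ CS : LazyCopStrat G k, ∀ RS : RobStrat G k,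
    gCaught CS.init CS.move RS.init RS.move

/-- The lazy cop number of `G`. -/
noncomputable def lazyCopNumber (G : SimpleGraph V) : ℕ := sInf {k | LazyCopsWin G k}

/-- A cop strategy in the attacking game: positions are `Option V` (`none` = eliminated);
eliminated cops stay eliminated, surviving cops stay or move to an adjacent vertex. -/
structure AttackCopStrat (G : SimpleGraph V) (k : ℕ) where
  init : Fin k → V
  move : (Fin k → Option V) → V → Fin k → Option V
  valid : ∀ c r i, (c i = none → move c r i = none) ∧
    ∀ x, c i = some x → move c r i = some x ∨ ∃ y, G.Adj x y ∧ move c r i = some y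

/-- A robber strategy in the attacking game; moving onto a vertex occupied by a cop
constitutes an attack. -/
structure AttackRobStrat (G : SimpleGraph V) (k : ℕ) where
  init : (Fin k → Option V) → V
  move : (Fin k → Option V) → V → V
  valid : ∀ c r, move c r = r ∨ G.Adj r (move c r)

/-- The play of the attacking game: in each round the cops move, then the robber moves;
if the robber moves onto a vertex occupied by exactly one cop, that cop is eliminated
(if it is occupied by two or more cops, nobody is eliminated and the robber will be
caught there). -/
def aplay [DecidableEq V] {G : SimpleGraph V} {k : ℕ}
    (CS : AttackCopStrat G k) (RS : AttackRobStrat G k) :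
    ℕ → (Fin k → Option V) × V
  | 0 => ((fun i => some (CS.init i)), RS.init fun i => some (CS.init i))
  | n + 1 =>
    let p := aplay CS RS n
    let c' := CS.move p.1 p.2
    let r' := RS.move c' p.2
    if r' ≠ p.2 ∧ (Finset.univ.filter fun i => c' i = some r').card = 1 then
      ((fun i => if c' i = some r' then none else c' i), r')
    else (c', r')

/-- The robber is caught in the attacking game: at some moment a (surviving) cop occupies
the robber's vertex, either after the cops' move or after the robber's move (in particular
when the robber attacks a vertex holding at least two cops). -/
def AttackCaught [DecidableEq V] {G : SimpleGraph V} {k : ℕ}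
    (CS : AttackCopStrat G k) (RS : AttackRobStrat G k) : Prop :=
  ∃ n, (∃ i, (aplay CS RS n).1 i = some (aplay CS RS n).2) ∨
    ∃ i, CS.move (aplay CS RS n).1 (aplay CS RS n).2 i = some (aplay CS RS n).2

/-- `k` cops have a winning strategy against an attacking robber on `G`. -/
def AttackCopsWin [DecidableEq V] (G : SimpleGraph V) (k : ℕ) : Prop :=
  ∃ CS : AttackCopStrat G k, ∀ RS : AttackRobStrat G k, AttackCaught CS RS

/-- The attacking cop number of `G`. -/
noncomputable def attackCopNumber [DecidableEq V] (G : SimpleGraph V) : ℕ :=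
  sInf {k | AttackCopsWin G k}

/-- A fully active cop strategy: every cop must move to an adjacent vertex each turn. -/
structure ActiveCopStrat (G : SimpleGraph V) (k : ℕ) where
  init : Fin k → V
  move : (Fin k → V) → V → Fin k → V
  valid : ∀ c r i, G.Adj (c i) (move c r i)

/-- A fully active robber strategy: the robber must move to an adjacent vertex each turn. -/
structure ActiveRobStrat (G : SimpleGraph V) (k : ℕ) where
  init : (Fin k → V) → V
  move : (Fin k → V) → V → V
  valid : ∀ c r, G.Adj r (move c r)

/-- `k` fully active cops have a winning strategy on `G` (against a fully active robber). -/
def ActiveCopsWin (G : SimpleGraph V) (k : ℕ) : Prop :=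
  ∃ CS : ActiveCopStrat G k, ∀ RS : ActiveRobStrat G k,
    gCaught CS.init CS.move RS.init RS.move

/-- The fully active cop number of `G`. -/
noncomputable def activeCopNumber (G : SimpleGraph V) : ℕ :=
  sInf {k | ActiveCopsWin G k}

/-! ### Auxiliary lemmas -/

section Aux

set_option linter.unusedSectionVars false

variable [Fintype V] [DecidableEq V] (G : SimpleGraph V)

lemma gplay_succ {k : ℕ} (ci : Fin k → V) (cm : (Fin k → V) → V → Fin k → V)
    (ri : (Fin k → V) → V) (rm : (Fin k → V) → V → V) (n : ℕ) :
    gplay ci cm ri rm (n + 1) =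
      (cm (gplay ci cm ri rm n).1 (gplay ci cm ri rm n).2,
        rm (cm (gplay ci cm ri rm n).1 (gplay ci cm ri rm n).2)
          (gplay ci cm ri rm n).2) := rfl

lemma aplay_succ {G : SimpleGraph V} {k : ℕ}
    (CS : AttackCopStrat G k) (RS : AttackRobStrat G k) (n : ℕ) :
    aplay CS RS (n + 1) =
      (let p := aplay CS RS n
       let c' := CS.move p.1 p.2
       let r' := RS.move c' p.2
       if r' ≠ p.2 ∧ (Finset.univ.filter fun i => c' i = some r').card = 1 then
         ((fun i => if c' i = some r' then none else c' i), r')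
       else (c', r')) := rfl

lemma copsWin_card [Nonempty V] : CopsWin G (Fintype.card V) := by
  classical
  refine ⟨⟨(Fintype.equivFin V).symm, fun c _ => c, fun c r i => Or.inl rfl⟩, fun RS => ?_⟩
  refine ⟨0, Fintype.equivFin V (RS.init (Fintype.equivFin V).symm), Or.inl ?_⟩
  simp [gplay]

lemma lazyCopsWin_card [Nonempty V] : LazyCopsWin G (Fintype.card V) := by
  classical
  refine ⟨⟨⟨(Fintype.equivFin V).symm, fun c _ => c, fun c r i => Or.inl rfl⟩,
    fun c r i j hi _ => absurd rfl hi⟩, fun RS => ?_⟩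
  refine ⟨0, Fintype.equivFin V (RS.init (Fintype.equivFin V).symm), Or.inl ?_⟩
  simp [gplay]

lemma lazy_to_plain {k : ℕ} (h : LazyCopsWin G k) : CopsWin G k := by
  obtain ⟨CS, hCS⟩ := h
  exact ⟨CS.toCopStrat, fun RS => hCS RS⟩

lemma attackCopsWin_card [Nonempty V] : AttackCopsWin G (Fintype.card V) := by
  classical
  refine ⟨⟨(Fintype.equivFin V).symm, fun c _ => c,
    fun c r i => ⟨fun h => h, fun x hx => Or.inl hx⟩⟩, fun RS => ?_⟩
  refine ⟨0, Or.inl ⟨Fintype.equivFin V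
    (RS.init fun i => some ((Fintype.equivFin V).symm i)), ?_⟩⟩
  simp [aplay]

/-- Simulation of an attacking-cops strategy in the classical game. -/
lemma attack_to_plain [Nonempty V] {k : ℕ} (h : AttackCopsWin G k) : CopsWin G k := by
  classical
  obtain ⟨CS, hCS⟩ := h
  set v₀ : V := Classical.arbitrary V
  set Dm : (Fin k → V) → V → Fin k → V :=
    fun c r i => (CS.move (fun j => some (c j)) r i).getD (c i) with hDm
  have hmove : ∀ (c : Fin k → V) (r : V) (i : Fin k),
      CS.move (fun j => some (c j)) r i = some (Dm c r i) := by
    intro c r i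
    rcases (CS.valid (fun j => some (c j)) r i).2 (c i) rfl with h1 | ⟨y, _, h1⟩ <;>
      simp [hDm, h1]
  have hvalid : ∀ c r i, Dm c r i = c i ∨ G.Adj (c i) (Dm c r i) := by
    intro c r i
    rcases (CS.valid (fun j => some (c j)) r i).2 (c i) rfl with h1 | ⟨y, hy, h1⟩
    · exact Or.inl (by simp [hDm, h1])
    · refine Or.inr ?_
      have : Dm c r i = y := by simp [hDm, h1]
      rw [this]; exact hy
  refine ⟨⟨CS.init, Dm, hvalid⟩, fun RS => ?_⟩
  show gCaught CS.init Dm RS.init RS.move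
  set RS' : AttackRobStrat G k :=
    ⟨fun co => RS.init (fun j => (co j).getD v₀),
     fun co r => RS.move (fun j => (co j).getD v₀) r,
     fun co r => RS.valid _ r⟩ with hRS'
  by_contra hnc
  unfold gCaught at hnc
  push_neg at hnc
  -- the plays coincide
  have key : ∀ n, aplay CS RS' n =
      ((fun i => some ((gplay CS.init Dm RS.init RS.move n).1 i)),
        (gplay CS.init Dm RS.init RS.move n).2) := by
    intro n
    induction n with
    | zero => simp [aplay, gplay, hRS']
    | succ n ih =>
      set p := gplay CS.init Dm RS.init RS.move n with hp
      have harg : (fun j => (CS.move (fun i => some (p.1 i)) p.2 j).getD v₀)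
          = Dm p.1 p.2 := funext fun j => by rw [hmove]; rfl
      have h2 : RS'.move (CS.move (fun i => some (p.1 i)) p.2) p.2
          = RS.move (Dm p.1 p.2) p.2 := by
        show RS.move (fun j => (CS.move (fun i => some (p.1 i)) p.2 j).getD v₀) p.2 = _
        rw [harg]
      have hfilter : ¬ ((RS'.move (CS.move (fun i => some (p.1 i)) p.2) p.2 ≠ p.2) ∧
          (Finset.univ.filter fun i =>
            CS.move (fun i => some (p.1 i)) p.2 i
              = some (RS'.move (CS.move (fun i => some (p.1 i)) p.2) p.2)).card = 1) := by
        rintro ⟨-, hcard⟩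
        obtain ⟨i, hi⟩ := Finset.card_pos.mp (by rw [hcard]; norm_num)
        rw [Finset.mem_filter] at hi
        rw [hmove, h2] at hi
        refine (hnc (n+1) i).1 ?_
        have : gplay CS.init Dm RS.init RS.move (n+1)
            = (Dm p.1 p.2, RS.move (Dm p.1 p.2) p.2) := by
          rw [gplay_succ, ← hp]
        rw [this]
        exact Option.some_injective _ hi.2
      rw [aplay_succ, ih]
      simp only []
      rw [if_neg hfilter]
      refine Prod.ext ?_ ?_
      · funext i
        show CS.move (fun i => some (p.1 i)) p.2 i
            = some ((gplay CS.init Dm RS.init RS.move (n+1)).1 i)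
        rw [hmove, gplay_succ]
      · show RS'.move (CS.move (fun i => some (p.1 i)) p.2) p.2
            = (gplay CS.init Dm RS.init RS.move (n+1)).2
        rw [h2, gplay_succ, ← hp]
  obtain ⟨n, hcap⟩ := hCS RS'
  rcases hcap with ⟨i, hi⟩ | ⟨i, hi⟩
  · rw [key n] at hi
    exact (hnc n i).1 (Option.some_injective _ hi)
  · rw [key n] at hi
    simp only at hi
    rw [hmove] at hi
    exact (hnc n i).2 (Option.some_injective _ hi)

/-- Index juggling for pairs of cops. -/
def halfIdx {k : ℕ} (i : Fin (2*k)) : Fin k := ⟨i / 2, by omega⟩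

def dblA {k : ℕ} (j : Fin k) : Fin (2*k) := ⟨2*j, by omega⟩

def dblB {k : ℕ} (j : Fin k) : Fin (2*k) := ⟨2*j+1, by omega⟩

def pairPartner {k : ℕ} (i : Fin (2*k)) : Fin (2*k) := ⟨2*(i/2) + (1 - i % 2), by omega⟩

lemma halfIdx_dblA {k : ℕ} (j : Fin k) : halfIdx (dblA j) = j := by
  apply Fin.ext
  simp only [halfIdx, dblA]
  omega

lemma halfIdx_partner {k : ℕ} (i : Fin (2*k)) : halfIdx (pairPartner i) = halfIdx i := by
  apply Fin.ext
  simp only [halfIdx, pairPartner]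
  omega

lemma partner_ne {k : ℕ} (i : Fin (2*k)) : pairPartner i ≠ i := by
  intro h
  have := congrArg Fin.val h
  simp only [pairPartner] at this
  omega

/-- Doubling the cops wins against an attacking robber. -/
lemma plain_to_attack [Nonempty V] {k : ℕ} (h : CopsWin G k) :
    AttackCopsWin G (2*k) := by
  classical
  obtain ⟨CS, hCS⟩ := h
  set v₀ : V := Classical.arbitrary V
  set Am : (Fin (2*k) → Option V) → V → Fin (2*k) → Option V :=
    fun co r i => (co i).map (fun x =>
      let t := CS.move (fun j => (co (dblA j)).getD v₀) r (halfIdx i)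
      if x = t ∨ G.Adj x t then t else x) with hAm
  have hvalid : ∀ co r i, (co i = none → Am co r i = none) ∧
      ∀ x, co i = some x → Am co r i = some x ∨ ∃ y, G.Adj x y ∧ Am co r i = some y := by
    intro co r i
    constructor
    · intro hi; simp [hAm, hi]
    · intro x hx
      set t := CS.move (fun j => (co (dblA j)).getD v₀) r (halfIdx i) with ht
      have hAmeq : Am co r i = some (if x = t ∨ G.Adj x t then t else x) := by
        simp [hAm, hx, ← ht]
      by_cases hc : x = t ∨ G.Adj x t
      · rcases hc with hc | hc
        · subst hc; exact Or.inl (by rw [hAmeq, if_pos (Or.inl rfl)])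
        · exact Or.inr ⟨t, hc, by rw [hAmeq, if_pos (Or.inr hc)]⟩
      · exact Or.inl (by rw [hAmeq, if_neg hc])
  set A : AttackCopStrat G (2*k) := ⟨fun i => CS.init (halfIdx i), Am, hvalid⟩ with hA
  refine ⟨A, fun RS' => ?_⟩
  set RS : RobStrat G k :=
    ⟨fun c => RS'.init (fun i => some (c (halfIdx i))),
     fun c r => RS'.move (fun i => some (c (halfIdx i))) r,
     fun c r => RS'.valid _ r⟩ with hRS
  set g := gplay CS.init CS.move RS.init RS.move with hg
  -- the key computation of the doubled cops' moves along the simulated play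
  have cmove : ∀ (c : Fin k → V) (r : V) (i : Fin (2*k)),
      Am (fun i => some (c (halfIdx i))) r i = some (CS.move c r (halfIdx i)) := by
    intro c r i
    have hcfg : (fun j => ((fun i => some (c (halfIdx i))) (dblA j)).getD v₀) = c := by
      funext j; simp [halfIdx_dblA]
    simp only [hAm, Option.map_some, hcfg]
    congr 1
    rcases CS.valid c r (halfIdx i) with h1 | h1
    · rw [if_pos (Or.inl h1.symm)]
    · rw [if_pos (Or.inr h1)]
  have key : ∀ n, aplay A RS' n =
      ((fun i => some ((g n).1 (halfIdx i))), (g n).2) := by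
    intro n
    induction n with
    | zero =>
      simp only [aplay, hg, gplay, hA, hRS]
    | succ n ih =>
      set p := g n with hp
      have hco : (aplay A RS' n).1 = fun i => some (p.1 (halfIdx i)) := by rw [ih]
      have hr : (aplay A RS' n).2 = p.2 := by rw [ih]
      have hc' : Am (aplay A RS' n).1 (aplay A RS' n).2
          = fun i => some (CS.move p.1 p.2 (halfIdx i)) := by
        funext i
        rw [hco, hr, cmove]
      have hr' : RS'.move (Am (aplay A RS' n).1 (aplay A RS' n).2) (aplay A RS' n).2
          = RS.move (CS.move p.1 p.2) p.2 := by
        rw [hc', hr]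
      have hfilter : ¬ ((RS'.move (Am (aplay A RS' n).1 (aplay A RS' n).2)
            (aplay A RS' n).2 ≠ (aplay A RS' n).2) ∧
          (Finset.univ.filter fun i => Am (aplay A RS' n).1 (aplay A RS' n).2 i
            = some (RS'.move (Am (aplay A RS' n).1 (aplay A RS' n).2)
              (aplay A RS' n).2)).card = 1) := by
        rintro ⟨-, hcard⟩
        obtain ⟨a, ha⟩ := Finset.card_eq_one.mp hcard
        have hmem : ∀ b, b ∈ (Finset.univ.filter fun i =>
            Am (aplay A RS' n).1 (aplay A RS' n).2 i
              = some (RS'.move (Am (aplay A RS' n).1 (aplay A RS' n).2)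
                (aplay A RS' n).2)) ↔ b = a := by
          intro b; rw [ha]; exact Finset.mem_singleton
        have haa := (hmem a).mpr rfl
        rw [Finset.mem_filter, hc'] at haa
        have hpa : pairPartner a ∈ (Finset.univ.filter fun i =>
            Am (aplay A RS' n).1 (aplay A RS' n).2 i
              = some (RS'.move (Am (aplay A RS' n).1 (aplay A RS' n).2)
                (aplay A RS' n).2)) := by
          rw [Finset.mem_filter, hc']
          refine ⟨Finset.mem_univ _, ?_⟩
          simp only [halfIdx_partner]
          exact haa.2
        exact partner_ne a ((hmem _).mp hpa)
      show (let p' := aplay A RS' n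
        let c' := A.move p'.1 p'.2
        let r' := RS'.move c' p'.2
        if r' ≠ p'.2 ∧ (Finset.univ.filter fun i => c' i = some r').card = 1 then
          ((fun i => if c' i = some r' then none else c' i), r')
        else (c', r')) = _
      show (if RS'.move (Am (aplay A RS' n).1 (aplay A RS' n).2) (aplay A RS' n).2
              ≠ (aplay A RS' n).2 ∧
            (Finset.univ.filter fun i => Am (aplay A RS' n).1 (aplay A RS' n).2 i
              = some (RS'.move (Am (aplay A RS' n).1 (aplay A RS' n).2)
                (aplay A RS' n).2)).card = 1 then _ else _) = _
      rw [if_neg hfilter]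
      show (Am (aplay A RS' n).1 (aplay A RS' n).2,
        RS'.move (Am (aplay A RS' n).1 (aplay A RS' n).2) (aplay A RS' n).2) = _
      rw [hc', hr]
      have hgs : g (n+1) = (CS.move p.1 p.2, RS.move (CS.move p.1 p.2) p.2) := by
        rw [hg, gplay_succ, ← hg, ← hp]
      rw [hgs]
  -- transfer the classical capture to the attacking game
  obtain ⟨n, j, hj⟩ := hCS RS
  rcases hj with hj | hj
  · refine ⟨n, Or.inl ⟨dblA j, ?_⟩⟩
    rw [key n]
    simp only [halfIdx_dblA]
    exact congrArg some hj
  · refine ⟨n, Or.inr ⟨dblA j, ?_⟩⟩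
    show Am (aplay A RS' n).1 (aplay A RS' n).2 (dblA j) = some (aplay A RS' n).2
    rw [key n]
    simp only []
    rw [cmove]
    simp only [halfIdx_dblA]
    exact congrArg some hj

lemma dblA_mod {k : ℕ} (j : Fin k) : (dblA j).val % 2 = 0 := by
  simp only [dblA]; omega

lemma dblB_mod {k : ℕ} (j : Fin k) : (dblB j).val % 2 = 1 := by
  simp only [dblB]; omega

lemma idx_eq_dbl {k : ℕ} (i : Fin (2*k)) :
    i = dblA (halfIdx i) ∨ i = dblB (halfIdx i) := by
  have hlt := i.isLt
  rcases Nat.mod_two_eq_zero_or_one i.val with h | h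
  · left; apply Fin.ext; simp only [dblA, halfIdx]; omega
  · right; apply Fin.ext; simp only [dblB, halfIdx]; omega

lemma halfIdx_dblB {k : ℕ} (j : Fin k) : halfIdx (dblB j) = j := by
  apply Fin.ext
  simp only [halfIdx, dblB]
  omega

/-- Legal move for classical cops. -/
def legalC {k : ℕ} (c c' : Fin k → V) : Prop := ∀ i, c' i = c i ∨ G.Adj (c i) (c' i)

/-- Legal move for fully active cops. -/
def legalA {k : ℕ} (c c' : Fin k → V) : Prop := ∀ i, G.Adj (c i) (c' i)

/-- Classical cops (to move) can force a capture within `n` rounds. -/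
def CWin (k : ℕ) : ℕ → (Fin k → V) → V → Prop
  | 0, c, r => (∃ i, c i = r) ∨ ∃ c', legalC G c c' ∧ ∃ i, c' i = r
  | n+1, c, r => (∃ i, c i = r) ∨ ∃ c', legalC G c c' ∧
      ((∃ i, c' i = r) ∨ ∀ r', (r' = r ∨ G.Adj r r') → CWin k n c' r')

/-- Fully active cops (to move) can force a capture within `n` rounds. -/
def AWin (k : ℕ) : ℕ → (Fin k → V) → V → Prop
  | 0, c, r => (∃ i, c i = r) ∨ ∃ c', legalA G c c' ∧ ∃ i, c' i = r
  | n+1, c, r => (∃ i, c i = r) ∨ ∃ c', legalA G c c' ∧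
      ((∃ i, c' i = r) ∨ ∀ r', G.Adj r r' → AWin k n c' r')

lemma cwin_mono {k : ℕ} : ∀ (n : ℕ) (c : Fin k → V) (r : V),
    CWin G k n c r → CWin G k (n+1) c r := by
  intro n
  induction n with
  | zero =>
    intro c r h
    rcases h with h | ⟨c', hl, hcap⟩
    · exact Or.inl h
    · exact Or.inr ⟨c', hl, Or.inl hcap⟩
  | succ n ih =>
    intro c r h
    rcases h with h | ⟨c', hl, h⟩
    · exact Or.inl h
    · rcases h with h | h
      · exact Or.inr ⟨c', hl, Or.inl h⟩
      · exact Or.inr ⟨c', hl, Or.inr fun r' hr' => ih c' r' (h r' hr')⟩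

lemma cwin_mono_le {k : ℕ} {n n' : ℕ} (h : n ≤ n') {c : Fin k → V} {r : V}
    (hw : CWin G k n c r) : CWin G k n' c r := by
  induction n' with
  | zero => rwa [Nat.le_zero.mp h] at hw
  | succ n' ih =>
    rcases Nat.lt_or_ge n (n'+1) with h' | h'
    · exact cwin_mono G n' _ _ (ih (Nat.lt_succ_iff.mp h'))
    · rwa [Nat.le_antisymm h h'] at hw

/-- From a winning classical cop strategy, the initial position has finite rank against
every robber position. -/
lemma copsWin_rank {k : ℕ} (h : CopsWin G k) :
    ∃ c₀ : Fin k → V, ∀ r, ∃ n, CWin G k n c₀ r := by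
  classical
  obtain ⟨CS, hCS⟩ := h
  by_contra h'
  push_neg at h'
  obtain ⟨r0, hr0⟩ := h' CS.init
  -- single-step escape
  have step : ∀ (c : Fin k → V) (r : V), (∀ n, ¬ CWin G k n c r) →
      (∀ i, c i ≠ r) ∧ (∀ i, CS.move c r i ≠ r) ∧
      ∃ r', (r' = r ∨ G.Adj r r') ∧ ∀ n, ¬ CWin G k n (CS.move c r) r' := by
    intro c r hc
    have hlC : legalC G c (CS.move c r) := fun i => CS.valid c r i
    have h0 := hc 0
    simp only [CWin] at h0
    push_neg at h0
    refine ⟨h0.1, h0.2 _ hlC, ?_⟩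
    by_contra hx
    push_neg at hx
    set f : V → ℕ := fun r' =>
      if hh : ∃ n, CWin G k n (CS.move c r) r' then Nat.find hh else 0 with hf
    set N := Finset.univ.sup f with hN
    refine hc (N+1) (Or.inr ⟨CS.move c r, hlC, Or.inr fun r' hr' => ?_⟩)
    obtain ⟨n', hn'⟩ := hx r' hr'
    have hex : ∃ n, CWin G k n (CS.move c r) r' := ⟨n', hn'⟩
    have h1 : CWin G k (f r') (CS.move c r) r' := by
      rw [hf]; simp only [dif_pos hex]; exact Nat.find_spec hex
    exact cwin_mono_le G (Finset.le_sup (Finset.mem_univ r')) h1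
  -- the escaping robber strategy
  set RS : RobStrat G k :=
    ⟨fun _ => r0,
     fun c' r => if hh : ∃ r', (r' = r ∨ G.Adj r r') ∧ ∀ n, ¬ CWin G k n c' r' then
        Classical.choose hh else r,
     by
      intro c r
      split
      next hh => exact (Classical.choose_spec hh).1
      next => exact Or.inl rfl⟩ with hRS
  set p := gplay CS.init CS.move RS.init RS.move with hp
  have inv : ∀ m, ∀ n, ¬ CWin G k n (p m).1 (p m).2 := by
    intro m
    induction m with
    | zero => exact hr0
    | succ m ih =>
      obtain ⟨-, -, r', hr', hall⟩ := step (p m).1 (p m).2 ih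
      have hex : ∃ r'', (r'' = (p m).2 ∨ G.Adj (p m).2 r'') ∧
          ∀ n, ¬ CWin G k n (CS.move (p m).1 (p m).2) r'' := ⟨r', hr', hall⟩
      have hmv : RS.move (CS.move (p m).1 (p m).2) (p m).2 = Classical.choose hex :=
        dif_pos hex
      have hps : p (m+1) = (CS.move (p m).1 (p m).2,
          RS.move (CS.move (p m).1 (p m).2) (p m).2) := by
        rw [hp, gplay_succ]
      rw [hps, hmv]
      exact (Classical.choose_spec hex).2
  obtain ⟨m, i, hmi⟩ := hCS RS
  obtain ⟨hc1, hc2, -⟩ := step (p m).1 (p m).2 (inv m)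
  rcases hmi with hmi | hmi
  · exact hc1 i hmi
  · exact hc2 i hmi

/-- The invariant tying a classical configuration to a doubled active configuration. -/
def PairInv {k : ℕ} (c : Fin k → V) (c2 : Fin (2*k) → V) : Prop :=
  ∀ j, (c2 (dblA j) = c j ∧ G.Adj (c j) (c2 (dblB j))) ∨
    (c2 (dblB j) = c j ∧ G.Adj (c j) (c2 (dblA j)))

lemma pairInv_capture {k : ℕ} {c : Fin k → V} {c2 : Fin (2*k) → V} {r : V}
    (hinv : PairInv G c c2) (h : ∃ j, c j = r) : ∃ i, c2 i = r := by
  obtain ⟨j, hj⟩ := h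
  rcases hinv j with ⟨h1, -⟩ | ⟨h1, -⟩
  · exact ⟨dblA j, h1.trans hj⟩
  · exact ⟨dblB j, h1.trans hj⟩

/-- One step of the pair simulation: the doubled cops can actively follow any legal
classical move maintaining the invariant. -/
lemma pair_step {k : ℕ} (c c' : Fin k → V) (c2 : Fin (2*k) → V)
    (hl : legalC G c c') (hinv : PairInv G c c2) :
    ∃ c2', legalA G c2 c2' ∧ PairInv G c' c2' := by
  classical
  set tA : Fin k → V := fun j =>
    if c' j = c j then c2 (dblB j) else if c2 (dblA j) = c j then c' j else c j
    with htA
  set tB : Fin k → V := fun j =>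
    if c' j = c j then c2 (dblA j) else if c2 (dblA j) = c j then c j else c' j
    with htB
  set c2' : Fin (2*k) → V :=
    fun i => if i.val % 2 = 0 then tA (halfIdx i) else tB (halfIdx i) with hc2'
  have hA : ∀ j : Fin k, c2' (dblA j) = tA j := by
    intro j
    rw [hc2']
    simp only [dblA_mod, halfIdx_dblA, if_pos]
  have hB : ∀ j : Fin k, c2' (dblB j) = tB j := by
    intro j
    rw [hc2']
    have h1 : (dblB j).val % 2 = 1 := dblB_mod j
    simp only []
    rw [if_neg (by omega), halfIdx_dblB]
  refine ⟨c2', ?_, ?_⟩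
  · -- legality
    intro i
    rcases idx_eq_dbl i with hi | hi
    · rw [hi, hA, halfIdx]
      set j : Fin k := ⟨i.val / 2, by omega⟩
      by_cases hs : c' j = c j
      · rw [htA]; simp only [if_pos hs]
        rcases hinv j with ⟨h1, h2⟩ | ⟨h1, h2⟩
        · rw [h1]; exact h2
        · rw [h1]; exact h2.symm
      · have hadj : G.Adj (c j) (c' j) := (hl j).resolve_left hs
        rw [htA]; simp only [if_neg hs]
        by_cases hA' : c2 (dblA j) = c j
        · rw [if_pos hA', hA']; exact hadj
        · rw [if_neg hA']
          rcases hinv j with ⟨h1, h2⟩ | ⟨h1, h2⟩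
          · exact absurd h1 hA'
          · exact h2.symm
    · rw [hi, hB, halfIdx]
      set j : Fin k := ⟨i.val / 2, by omega⟩
      by_cases hs : c' j = c j
      · rw [htB]; simp only [if_pos hs]
        rcases hinv j with ⟨h1, h2⟩ | ⟨h1, h2⟩
        · rw [h1]; exact h2.symm
        · rw [h1]; exact h2
      · have hadj : G.Adj (c j) (c' j) := (hl j).resolve_left hs
        rw [htB]; simp only [if_neg hs]
        by_cases hA' : c2 (dblA j) = c j
        · rw [if_pos hA']
          rcases hinv j with ⟨h1, h2⟩ | ⟨h1, h2⟩
          · exact h2.symm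
          · rw [hA'] at h2; exact absurd h2 G.irrefl
        · rw [if_neg hA']
          rcases hinv j with ⟨h1, h2⟩ | ⟨h1, h2⟩
          · exact absurd h1 hA'
          · rw [h1]; exact hadj
  · -- the invariant is maintained
    intro j
    rw [hA, hB]
    by_cases hs : c' j = c j
    · rw [htA, htB]; simp only [if_pos hs]
      rcases hinv j with ⟨h1, h2⟩ | ⟨h1, h2⟩
      · refine Or.inr ⟨h1.trans hs.symm, ?_⟩
        rw [hs]; exact h2
      · refine Or.inl ⟨h1.trans hs.symm, ?_⟩
        rw [hs]; exact h2
    · have hadj : G.Adj (c j) (c' j) := (hl j).resolve_left hs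
      rw [htA, htB]; simp only [if_neg hs]
      by_cases hA' : c2 (dblA j) = c j
      · rw [if_pos hA', if_pos hA']
        exact Or.inl ⟨rfl, hadj.symm⟩
      · rw [if_neg hA', if_neg hA']
        exact Or.inr ⟨rfl, hadj.symm⟩

lemma cwin_to_awin {k : ℕ} : ∀ (n : ℕ) (c : Fin k → V) (r : V) (c2 : Fin (2*k) → V),
    CWin G k n c r → PairInv G c c2 → AWin G (2*k) n c2 r := by
  intro n
  induction n with
  | zero =>
    intro c r c2 h hinv
    rcases h with h | ⟨c', hl, hcap⟩
    · exact Or.inl (pairInv_capture G hinv h)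
    · obtain ⟨c2', hleg, hinv'⟩ := pair_step G c c' c2 hl hinv
      exact Or.inr ⟨c2', hleg, pairInv_capture G hinv' hcap⟩
  | succ n ih =>
    intro c r c2 h hinv
    rcases h with h | ⟨c', hl, h⟩
    · exact Or.inl (pairInv_capture G hinv h)
    · obtain ⟨c2', hleg, hinv'⟩ := pair_step G c c' c2 hl hinv
      rcases h with h | h
      · exact Or.inr ⟨c2', hleg, Or.inl (pairInv_capture G hinv' h)⟩
      · exact Or.inr ⟨c2', hleg,
          Or.inr fun r' hr' => ih c' r' c2' (h r' (Or.inr hr')) hinv'⟩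

/-- From finite active ranks one obtains a positional winning fully active strategy. -/
lemma awin_to_activewin {m : ℕ} (hdeg : ∀ v : V, ∃ w, G.Adj v w)
    (c₀ : Fin m → V) (h : ∀ r, ∃ n, AWin G m n c₀ r) : ActiveCopsWin G m := by
  classical
  set nbr : V → V := fun v => Classical.choose (hdeg v) with hnbrdef
  have hnbr : ∀ v, G.Adj v (nbr v) := fun v => Classical.choose_spec (hdeg v)
  have key : ∀ (c : Fin m → V) (r : V)
      (hh : (¬ ∃ i, c i = r) ∧ ∃ n, AWin G m n c r),
      ∃ c', legalA G c c' ∧ ((∃ i, c' i = r) ∨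
        ∀ r', G.Adj r r' → ∃ n', n' < Nat.find hh.2 ∧ AWin G m n' c' r') := by
    intro c r hh
    have hwin : AWin G m (Nat.find hh.2) c r := Nat.find_spec hh.2
    rcases hfind : Nat.find hh.2 with _ | n1
    · rw [hfind] at hwin
      rcases hwin with hcap | ⟨c', hl, hcap⟩
      · exact absurd hcap hh.1
      · exact ⟨c', hl, Or.inl hcap⟩
    · rw [hfind] at hwin
      rcases hwin with hcap | ⟨c', hl, hw⟩
      · exact absurd hcap hh.1
      · rcases hw with hcap | hw
        · exact ⟨c', hl, Or.inl hcap⟩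
        · exact ⟨c', hl, Or.inr fun r' hr' =>
            ⟨n1, by omega, hw r' hr'⟩⟩
  set mv : (Fin m → V) → V → Fin m → V := fun c r =>
    if hh : (¬ ∃ i, c i = r) ∧ ∃ n, AWin G m n c r then
      Classical.choose (key c r hh)
    else fun i => nbr (c i) with hmv
  have hvalid : ∀ c r i, G.Adj (c i) (mv c r i) := by
    intro c r i
    rw [hmv]
    dsimp only
    split
    · exact (Classical.choose_spec (key c r ‹_›)).1 i
    · exact hnbr (c i)
  set AS : ActiveCopStrat G m := ⟨c₀, mv, hvalid⟩ with hAS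
  refine ⟨AS, fun RS => ?_⟩
  show gCaught c₀ mv RS.init RS.move
  set p := gplay c₀ mv RS.init RS.move with hp
  have main : ∀ n, ∀ mm, AWin G m n (p mm).1 (p mm).2 →
      gCaught c₀ mv RS.init RS.move := by
    intro n
    induction n using Nat.strong_induction_on with
    | _ n ihn =>
      intro mm hAw
      by_cases hcap : ∃ i, (p mm).1 i = (p mm).2
      · obtain ⟨i, hi⟩ := hcap
        exact ⟨mm, i, Or.inl hi⟩
      · have hh : (¬ ∃ i, (p mm).1 i = (p mm).2) ∧
            ∃ n', AWin G m n' (p mm).1 (p mm).2 := ⟨hcap, n, hAw⟩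
        have hmveq : mv (p mm).1 (p mm).2 = Classical.choose (key _ _ hh) :=
          dif_pos hh
        obtain ⟨-, hspec⟩ := Classical.choose_spec (key _ _ hh)
        rcases hspec with ⟨i, hi⟩ | hfa
        · exact ⟨mm, i, Or.inr (by rw [hmveq]; exact hi)⟩
        · have hadj : G.Adj (p mm).2 (RS.move (mv (p mm).1 (p mm).2) (p mm).2) :=
            RS.valid _ _
          rw [hmveq] at hadj
          obtain ⟨n', hlt, hA'⟩ := hfa _ hadj
          have hle : Nat.find hh.2 ≤ n := Nat.find_le hAw
          have hps : p (mm+1) = (mv (p mm).1 (p mm).2,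
              RS.move (mv (p mm).1 (p mm).2) (p mm).2) := by
            rw [hp, gplay_succ]
          refine ihn n' (by omega) (mm+1) ?_
          rw [hps, hmveq]
          exact hA'
  obtain ⟨n, hn⟩ := h (RS.init c₀)
  exact main n 0 hn

lemma plain_to_active {k : ℕ} (hdeg : ∀ v : V, ∃ w, G.Adj v w)
    (h : CopsWin G k) : ActiveCopsWin G (2*k) := by
  classical
  obtain ⟨c₀, hrank⟩ := copsWin_rank G h
  set nbr : V → V := fun v => Classical.choose (hdeg v) with hnbrdef
  have hnbr : ∀ v, G.Adj v (nbr v) := fun v => Classical.choose_spec (hdeg v)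
  set c2₀ : Fin (2*k) → V :=
    fun i => if i.val % 2 = 0 then c₀ (halfIdx i) else nbr (c₀ (halfIdx i)) with hc2
  have hinv : PairInv G c₀ c2₀ := by
    intro j
    left
    constructor
    · rw [hc2]; simp only [dblA_mod, halfIdx_dblA, if_pos]
    · rw [hc2]
      have : (dblB j).val % 2 = 1 := dblB_mod j
      simp only []
      rw [if_neg (by omega), halfIdx_dblB]
      exact hnbr _
  refine awin_to_activewin G hdeg c2₀ fun r => ?_
  obtain ⟨n, hn⟩ := hrank r
  exact ⟨n, cwin_to_awin G n c₀ r c2₀ hn hinv⟩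

end Aux

/-- For any connected graph `G`:
(a) `c(G) ≤ c_lazy(G)`; (b) `c(G) ≤ c_attack(G) ≤ 2·c(G)`; (c) `c_active(G) ≤ 2·c(G)`. -/
theorem copNumber_variant_bounds
    {V : Type*} [Fintype V] [DecidableEq V] (G : SimpleGraph V) (hG : G.Connected) :
    copNumber G ≤ lazyCopNumber G ∧
      (copNumber G ≤ attackCopNumber G ∧ attackCopNumber G ≤ 2 * copNumber G) ∧
      activeCopNumber G ≤ 2 * copNumber G := by
  classical
  have hne : Nonempty V := hG.nonempty
  have hCw : CopsWin G (Fintype.card V) := copsWin_card G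
  have hk : CopsWin G (copNumber G) := Nat.sInf_mem (s := {k | CopsWin G k}) ⟨_, hCw⟩
  refine ⟨?_, ⟨?_, ?_⟩, ?_⟩
  · have hL : LazyCopsWin G (lazyCopNumber G) :=
      Nat.sInf_mem (s := {k | LazyCopsWin G k}) ⟨_, lazyCopsWin_card G⟩
    exact Nat.sInf_le (lazy_to_plain G hL)
  · have hA : AttackCopsWin G (attackCopNumber G) :=
      Nat.sInf_mem (s := {k | AttackCopsWin G k}) ⟨_, attackCopsWin_card G⟩
    exact Nat.sInf_le (attack_to_plain G hA)
  · exact Nat.sInf_le (plain_to_attack G hk)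
  · by_cases hcard : 1 < Fintype.card V
    · have hdeg : ∀ v : V, ∃ w, G.Adj v w := by
        intro v
        obtain ⟨w, hw⟩ := Fintype.exists_ne_of_one_lt_card hcard v
        obtain ⟨p⟩ := hG.preconnected v w
        cases p with
        | nil => exact absurd rfl hw
        | cons h q => exact ⟨_, h⟩
      exact Nat.sInf_le (plain_to_active G hdeg hk)
    · have hsub : ∀ a b : V, a = b :=
        fun a b => Fintype.card_le_one_iff.mp (le_of_not_gt hcard) a b
      have h0 : ActiveCopsWin G 0 := by
        refine ⟨⟨Fin.elim0, fun _ _ => Fin.elim0, fun c r i => i.elim0⟩, fun RS => ?_⟩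
        exfalso
        have v := Classical.arbitrary V
        have h := RS.valid Fin.elim0 v
        exact G.irrefl (hsub (RS.move Fin.elim0 v) v ▸ h)
      exact le_trans (Nat.sInf_le h0) (Nat.zero_le _)
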